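/- Let d ≥ 2 be an even integer, let e ≥ 1 be a divisor of d, set ε = d/e, and let s ≥ t ≥ 0 be integers with s ≥ 1 and s + t = e. Define u_j = q^{ε(s−j)} for 1 ≤ j ≤ s and u_{s+j} = −q^{d/2 − εj} for 1 ≤ j ≤ t (all exponents are nonnegative integers), and for 1 ≤ m ≤ e set V_m = q^{c_m} · ∏_{1≤j≤e, j≠m}(u_m − u_j), where c_m = ε(s−m) for m ≤ s and c_m = d/2 − ε(m−s) for m > s. Then π_{1/d}(V_1) − π_{1/d}(V_m) = m − 1 for all 1 ≤ m ≤ s, and π_{1/d}(V_1) − π_{1/d}(V_{s+m}) = s − t − 1 + m for all 1 ≤ m ≤ t. -/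

import Mathlib

open Polynomial

/-- `argCount t f` is the cardinality of the multiset `Arg_t(f)` of real numbers `λ` with
`0 < λ ≤ 2πt` such that `e^{iλ}` is a (complex) root of the real polynomial `f`, each such `λ`
counted with the multiplicity of `e^{iλ}` as a root of `f`. -/
noncomputable def argCount (t : ℝ) (f : Polynomial ℝ) : ℕ :=
  ((f.map (algebraMap ℝ ℂ)).roots.map fun ξ =>
    Nat.card {l : ℝ // 0 < l ∧ l ≤ 2 * Real.pi * t ∧ Complex.exp ((l : ℂ) * Complex.I) = ξ}).sum

/-- `piFn κ d f` is the rational number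
`π_{κ/d}(f) = (a(f) + A(f))·(κ/d) + |Arg_{κ/d}(f)| + (1/2)·(multiplicity of 1 as a root of f)`,
where `a(f)` is the multiplicity of `0` as a root of `f` and `A(f)` is the degree of `f`. -/
noncomputable def piFn (κ d : ℕ) (f : Polynomial ℝ) : ℚ :=
  ((rootMultiplicity 0 f : ℚ) + (f.natDegree : ℚ)) * (κ : ℚ) / (d : ℚ)
    + (argCount ((κ : ℝ) / (d : ℝ)) f : ℚ) + (rootMultiplicity 1 f : ℚ) / 2

lemma argCount_eq_zero {t : ℝ} {f : Polynomial ℝ}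
    (h : ∀ ξ ∈ (f.map (algebraMap ℝ ℂ)).roots, ∀ l : ℝ, 0 < l → l ≤ 2 * Real.pi * t →
      Complex.exp ((l : ℂ) * Complex.I) ≠ ξ) : argCount t f = 0 := by
  unfold argCount
  rw [Multiset.sum_eq_zero]
  intro x hx
  rw [Multiset.mem_map] at hx
  obtain ⟨ξ, hξ, rfl⟩ := hx
  rw [Nat.card_eq_zero]
  exact Or.inl ⟨fun x => h ξ hξ x.1 x.2.1 x.2.2.1 x.2.2.2⟩

lemma piFn_mul (κ d : ℕ) {f g : Polynomial ℝ} (hf : f ≠ 0) (hg : g ≠ 0) :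
    piFn κ d (f * g) = piFn κ d f + piFn κ d g := by
  have hfg : f * g ≠ 0 := mul_ne_zero hf hg
  have hmf : f.map (algebraMap ℝ ℂ) ≠ 0 :=
    (Polynomial.map_ne_zero_iff (algebraMap ℝ ℂ).injective).mpr hf
  have hmg : g.map (algebraMap ℝ ℂ) ≠ 0 :=
    (Polynomial.map_ne_zero_iff (algebraMap ℝ ℂ).injective).mpr hg
  unfold piFn argCount
  rw [Polynomial.map_mul, Polynomial.roots_mul (mul_ne_zero hmf hmg), Multiset.map_add,
    Multiset.sum_add, rootMultiplicity_mul hfg, rootMultiplicity_mul hfg,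
    natDegree_mul hf hg]
  push_cast
  ring

lemma piFn_C (κ d : ℕ) (r : ℝ) : piFn κ d (C r) = 0 := by
  unfold piFn argCount
  rw [Polynomial.map_C, Polynomial.roots_C, Multiset.map_zero, Multiset.sum_zero,
    rootMultiplicity_C, rootMultiplicity_C, natDegree_C]
  norm_num

lemma piFn_one (κ d : ℕ) : piFn κ d 1 = 0 := by
  rw [← Polynomial.C_1]; exact piFn_C κ d 1

lemma piFn_neg (κ d : ℕ) (f : Polynomial ℝ) : piFn κ d (-f) = piFn κ d f := by
  rcases eq_or_ne f 0 with rfl | hf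
  · rw [neg_zero]
  · have h : -f = C (-1) * f := by rw [map_neg, Polynomial.C_1, neg_one_mul]
    rw [h, piFn_mul κ d (by simp : (C (-1) : Polynomial ℝ) ≠ 0) hf, piFn_C, zero_add]

lemma piFn_prod {ι : Type*} (κ d : ℕ) (s : Finset ι) (f : ι → Polynomial ℝ)
    (h : ∀ i ∈ s, f i ≠ 0) : piFn κ d (∏ i ∈ s, f i) = ∑ i ∈ s, piFn κ d (f i) := by
  induction s using Finset.cons_induction with
  | empty => simpa using piFn_one κ d
  | cons a s ha ih =>
    rw [Finset.prod_cons, Finset.sum_cons,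
      piFn_mul κ d (h a (Finset.mem_cons_self a s))
        (by rw [Ne, Finset.prod_eq_zero_iff]; rintro ⟨i, hi, hfi⟩;
            exact h i (Finset.mem_cons_of_mem hi) hfi),
      ih (fun i hi => h i (Finset.mem_cons_of_mem hi))]

lemma piFn_X (d : ℕ) : piFn 1 d (X : Polynomial ℝ) = 2 / d := by
  have h0 : rootMultiplicity (0 : ℝ) X = 1 := by
    simpa using rootMultiplicity_X_sub_C_self (x := (0 : ℝ))
  have h1 : rootMultiplicity (1 : ℝ) X = 0 :=
    rootMultiplicity_eq_zero (by simp [IsRoot])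
  have h2 : ∀ t : ℝ, argCount t (X : Polynomial ℝ) = 0 := by
    intro t
    apply argCount_eq_zero
    intro ξ hξ l _ _ hl3
    rw [Polynomial.map_X, Polynomial.roots_X, Multiset.mem_singleton] at hξ
    subst hξ
    exact Complex.exp_ne_zero _ hl3
  unfold piFn
  rw [h0, h1, h2, natDegree_X]
  push_cast
  ring

lemma piFn_X_pow (d n : ℕ) : piFn 1 d ((X : Polynomial ℝ) ^ n) = 2 * n / d := by
  induction n with
  | zero => simpa using piFn_one 1 d
  | succ n ih =>
    rw [pow_succ, piFn_mul 1 d (pow_ne_zero n X_ne_zero) X_ne_zero, ih, piFn_X]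
    push_cast
    ring

-- auxiliary: no small-argument roots for polys whose roots are k-th roots of unity, k < d
lemma piFn_aux_arg (d k : ℕ) (hk : 1 ≤ k) (hkd : k < d) (ξ : ℂ) (hξ : ξ ^ k = 1)
    (l : ℝ) (hl1 : 0 < l) (hl2 : l ≤ 2 * Real.pi * (((1:ℕ):ℝ) / ((d:ℕ):ℝ)))
    (hl3 : Complex.exp ((l : ℂ) * Complex.I) = ξ) : False := by
  have hπ := Real.pi_pos
  have hexp : Complex.exp ((k : ℂ) * ((l : ℂ) * Complex.I)) = 1 := by
    rw [Complex.exp_nat_mul, hl3, hξ]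
  obtain ⟨n, hn⟩ := Complex.exp_eq_one_iff.mp hexp
  have h4 : ((k * l : ℝ) : ℂ) * Complex.I = (((n : ℝ) * (2 * Real.pi) : ℝ) : ℂ) * Complex.I := by
    push_cast
    linear_combination hn
  have hreal : (k : ℝ) * l = (n : ℝ) * (2 * Real.pi) := by
    exact_mod_cast mul_right_cancel₀ Complex.I_ne_zero h4
  have hk' : (1 : ℝ) ≤ (k : ℝ) := by exact_mod_cast hk
  have hd' : (k : ℝ) < (d : ℝ) := by exact_mod_cast hkd
  have hd0 : (0 : ℝ) < (d : ℝ) := lt_of_le_of_lt (by positivity) hd'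
  have hn0 : (0 : ℤ) < n := by
    by_contra hn0
    push_neg at hn0
    have : ((n : ℝ)) ≤ 0 := by exact_mod_cast hn0
    nlinarith
  have hn1 : (1 : ℝ) ≤ (n : ℝ) := by exact_mod_cast hn0
  have hinv : ((1:ℕ):ℝ) / ((d:ℕ):ℝ) * (d : ℝ) = 1 := by
    field_simp
    exact Nat.cast_one
  have hld : l * (d : ℝ) ≤ 2 * Real.pi := by
    have := mul_le_mul_of_nonneg_right hl2 hd0.le
    calc l * (d:ℝ) ≤ 2 * Real.pi * (((1:ℕ):ℝ) / ((d:ℕ):ℝ)) * (d:ℝ) := this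
      _ = 2 * Real.pi := by rw [mul_assoc, hinv, mul_one]
  nlinarith [mul_lt_mul_of_pos_right hd' hl1]


lemma piFn_X_pow_sub_one (d k : ℕ) (hk : 1 ≤ k) (hkd : k < d) :
    piFn 1 d ((X : Polynomial ℝ) ^ k - 1) = (k : ℚ) / d + 1 / 2 := by
  have hkne : k ≠ 0 := by omega
  have hC : (C 1 : Polynomial ℝ) = 1 := Polynomial.C_1
  have hne : (X : Polynomial ℝ) ^ k - 1 ≠ 0 := fun h => by
    have := congrArg (Polynomial.eval 0) h
    simp [zero_pow hkne] at this
  have h0 : rootMultiplicity (0 : ℝ) ((X : Polynomial ℝ) ^ k - 1) = 0 :=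
    rootMultiplicity_eq_zero (by simp [IsRoot, zero_pow hkne])
  have hsep : ((X : Polynomial ℝ) ^ k - 1).Separable := by
    rw [← hC]
    exact Polynomial.separable_X_pow_sub_C 1
      (by exact_mod_cast (show (k:ℝ) ≠ 0 by exact_mod_cast hkne)) one_ne_zero
  have h1 : rootMultiplicity (1 : ℝ) ((X : Polynomial ℝ) ^ k - 1) = 1 := by
    refine le_antisymm (Polynomial.rootMultiplicity_le_one_of_separable hsep 1) ?_
    exact (Polynomial.rootMultiplicity_pos hne).mpr (by simp [IsRoot])
  have hdeg : ((X : Polynomial ℝ) ^ k - 1).natDegree = k := by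
    rw [← hC]; exact natDegree_X_pow_sub_C
  have h2 : argCount (((1:ℕ):ℝ) / ((d:ℕ):ℝ)) ((X : Polynomial ℝ) ^ k - 1) = 0 := by
    apply argCount_eq_zero
    intro ξ hξ l hl1 hl2 hl3
    have hmap : ((X : Polynomial ℝ) ^ k - 1).map (algebraMap ℝ ℂ) = X ^ k - 1 := by
      simp
    rw [hmap] at hξ
    have hξr : ξ ^ k = 1 := by
      have := isRoot_of_mem_roots hξ
      simp only [IsRoot, eval_sub, eval_pow, eval_X, eval_one, sub_eq_zero] at this
      exact this
    exact piFn_aux_arg d k hk hkd ξ hξr l hl1 hl2 hl3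
  unfold piFn
  rw [h0, h1, h2, hdeg]
  push_cast
  ring

lemma piFn_X_pow_add_one (d k : ℕ) (hk : 1 ≤ k) (hkd : 2 * k < d) :
    piFn 1 d ((X : Polynomial ℝ) ^ k + 1) = (k : ℚ) / d := by
  have hkne : k ≠ 0 := by omega
  have hC : (C 1 : Polynomial ℝ) = 1 := Polynomial.C_1
  have h0 : rootMultiplicity (0 : ℝ) ((X : Polynomial ℝ) ^ k + 1) = 0 :=
    rootMultiplicity_eq_zero (by simp [IsRoot, zero_pow hkne])
  have h1 : rootMultiplicity (1 : ℝ) ((X : Polynomial ℝ) ^ k + 1) = 0 :=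
    rootMultiplicity_eq_zero (by simp [IsRoot])
  have hdeg : ((X : Polynomial ℝ) ^ k + 1).natDegree = k := by
    rw [← hC]; exact natDegree_X_pow_add_C
  have h2 : argCount (((1:ℕ):ℝ) / ((d:ℕ):ℝ)) ((X : Polynomial ℝ) ^ k + 1) = 0 := by
    apply argCount_eq_zero
    intro ξ hξ l hl1 hl2 hl3
    have hmap : ((X : Polynomial ℝ) ^ k + 1).map (algebraMap ℝ ℂ) = X ^ k + 1 := by
      simp
    rw [hmap] at hξ
    have hξr : ξ ^ k = -1 := by
      have := isRoot_of_mem_roots hξ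
      simp only [IsRoot, eval_add, eval_pow, eval_X, eval_one] at this
      linear_combination this
    have hξ2 : ξ ^ (2 * k) = 1 := by
      rw [mul_comm, pow_mul, hξr]
      norm_num
    exact piFn_aux_arg d (2 * k) (by omega) hkd ξ hξ2 l hl1 hl2 hl3
  unfold piFn
  rw [h0, h1, h2, hdeg]
  push_cast
  ring

lemma X_pow_sub_one_ne_zero {k : ℕ} (hk : k ≠ 0) : (X : Polynomial ℝ) ^ k - 1 ≠ 0 := fun h => by
  have := congrArg (Polynomial.eval 0) h
  simp [zero_pow hk] at this

lemma X_pow_add_one_ne_zero (k : ℕ) : (X : Polynomial ℝ) ^ k + 1 ≠ 0 := fun h => by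
  have := congrArg (Polynomial.eval 1) h
  simp at this

lemma X_pow_sub_X_pow_ne_zero {a b : ℕ} (h : a ≠ b) :
    (X : Polynomial ℝ) ^ a - X ^ b ≠ 0 := fun hh => by
  have h2 : (X : Polynomial ℝ) ^ a = X ^ b := by linear_combination hh
  have := congrArg Polynomial.natDegree h2
  rw [natDegree_X_pow, natDegree_X_pow] at this
  exact h this

lemma piFn_sub_aux {d a b : ℕ} (hba : b < a) (had : a < d) :
    piFn 1 d ((X : Polynomial ℝ) ^ a - X ^ b) = ((a : ℚ) + b) / d + 1 / 2 := by
  have hfact : (X : Polynomial ℝ) ^ a - X ^ b = X ^ b * (X ^ (a - b) - 1) := by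
    rw [mul_sub, mul_one, ← pow_add]
    congr 2
    omega
  rw [hfact, piFn_mul 1 d (pow_ne_zero b X_ne_zero) (X_pow_sub_one_ne_zero (by omega)),
    piFn_X_pow, piFn_X_pow_sub_one d (a - b) (by omega) (by omega)]
  have : ((a - b : ℕ) : ℚ) = (a : ℚ) - b := by
    push_cast [Nat.cast_sub hba.le]
    ring
  rw [this]
  ring

lemma piFn_sub {d a b : ℕ} (hab : a ≠ b) (had : a < d) (hbd : b < d) :
    piFn 1 d ((X : Polynomial ℝ) ^ a - X ^ b) = ((a : ℚ) + b) / d + 1 / 2 := by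
  rcases lt_or_gt_of_ne hab with h | h
  · have : (X : Polynomial ℝ) ^ a - X ^ b = -(X ^ b - X ^ a) := by ring
    rw [this, piFn_neg, piFn_sub_aux h hbd]
    ring
  · exact piFn_sub_aux h had

lemma piFn_add {d a b : ℕ} (h1 : 2 * a < d + 2 * b) (h2 : 2 * b < d + 2 * a) :
    piFn 1 d ((X : Polynomial ℝ) ^ a + X ^ b) = ((a : ℚ) + b) / d := by
  have haux : ∀ p q : ℕ, q < p → 2 * p < d + 2 * q →
      piFn 1 d ((X : Polynomial ℝ) ^ p + X ^ q) = ((p : ℚ) + q) / d := by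
    intro p q hqp hpd
    have hfact : (X : Polynomial ℝ) ^ p + X ^ q = X ^ q * (X ^ (p - q) + 1) := by
      rw [mul_add, mul_one, ← pow_add]
      congr 2
      omega
    rw [hfact, piFn_mul 1 d (pow_ne_zero q X_ne_zero) (X_pow_add_one_ne_zero _),
      piFn_X_pow, piFn_X_pow_add_one d (p - q) (by omega) (by omega)]
    have : ((p - q : ℕ) : ℚ) = (p : ℚ) - q := by
      push_cast [Nat.cast_sub hqp.le]
      ring
    rw [this]
    ring
  rcases lt_trichotomy a b with h | h | h
  · rw [add_comm ((X : Polynomial ℝ) ^ a), haux b a h (by omega)]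
    ring
  · subst h
    have : (X : Polynomial ℝ) ^ a + X ^ a = C 2 * X ^ a := by
      rw [show ((2:ℝ)) = ((2:ℕ):ℝ) by norm_num, Polynomial.C_eq_natCast]
      push_cast
      ring
    rw [this, piFn_mul 1 d (by norm_num) (pow_ne_zero a X_ne_zero), piFn_C, piFn_X_pow]
    ring
  · exact haux a b h h1

lemma X_pow_add_X_pow_ne_zero (a b : ℕ) : (X : Polynomial ℝ) ^ a + X ^ b ≠ 0 := fun h => by
  have := congrArg (Polynomial.eval 1) h
  simp at this

/-- Proposition 12.2: for the Coxeter Hecke algebra of type `(s,t)` and ambiance `d` (with `d`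
even, `e = s + t` dividing `d`, `ε = d/e`, `s ≥ t`, `s ≥ 1`), with parameters
`u_m = q^{ε(s−m)}` for `1 ≤ m ≤ s` and `u_{s+m} = −q^{d/2 − εm}` for `1 ≤ m ≤ t`, and
`V_m = q^{c_m}·∏_{j≠m}(u_m − u_j)` where `c_m` is the exponent of `u_m`:
`π_{1/d}(V_1) − π_{1/d}(V_m) = m − 1` for `1 ≤ m ≤ s` and
`π_{1/d}(V_1) − π_{1/d}(V_{s+m}) = s − t − 1 + m` for `1 ≤ m ≤ t`; that is, the `π_{1/d}`-values
of the relative degrees form the canonical perversity function. -/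
theorem piFn_coxeter_hecke (d e ε s t : ℕ) (hd : 2 ≤ d) (heven : Even d) (he : 1 ≤ e)
    (hdvd : e ∣ d) (hε : ε = d / e) (hs : 1 ≤ s) (hts : t ≤ s) (hst : s + t = e)
    (c : ℕ → ℕ) (hc : ∀ m, c m = if m ≤ s then ε * (s - m) else d / 2 - ε * (m - s))
    (u : ℕ → Polynomial ℝ) (hu : ∀ m, u m = if m ≤ s then X ^ c m else -X ^ c m)
    (V : ℕ → Polynomial ℝ)
    (hV : ∀ m, V m = X ^ c m * ∏ j ∈ (Finset.Icc 1 e).erase m, (u m - u j)) :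
    (∀ m, 1 ≤ m → m ≤ s → piFn 1 d (V 1) - piFn 1 d (V m) = (m : ℚ) - 1) ∧
    (∀ m, 1 ≤ m → m ≤ t →
      piFn 1 d (V 1) - piFn 1 d (V (s + m)) = (s : ℚ) - (t : ℚ) - 1 + (m : ℚ)) := by
  have hεpos : 0 < ε := by
    rw [hε]
    exact Nat.div_pos (Nat.le_of_dvd (by omega) hdvd) (by omega)
  have hde : ε * e = d := by rw [hε, Nat.div_mul_cancel hdvd]
  have hd2 : 2 * (d / 2) = d := Nat.mul_div_cancel' heven.two_dvd
  have hεst : ε * s + ε * t = d := by rw [← Nat.left_distrib, hst, hde]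
  have hεt_le : ε * t ≤ ε * s := Nat.mul_le_mul_left ε hts
  have hthalf : ε * t ≤ d / 2 := by omega
  -- c bounds
  have hclt : ∀ j, 1 ≤ j → j ≤ e → c j < d := by
    intro j h1 h2
    rw [hc]
    split_ifs with hjs
    · have h3 : ε * (s - j + 1) ≤ ε * e := Nat.mul_le_mul_left ε (by omega)
      have h4 : ε * (s - j + 1) = ε * (s - j) + ε := by ring
      omega
    · omega
  -- c distinct, left side
  have hcneL : ∀ i j, i ≤ s → j ≤ s → i ≠ j → c i ≠ c j := by
    intro i j hi hj hij
    rw [hc i, hc j, if_pos hi, if_pos hj]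
    intro hcc
    have := Nat.eq_of_mul_eq_mul_left hεpos hcc
    omega
  -- c distinct, right side
  have hcneR : ∀ i j, ¬ i ≤ s → i ≤ e → ¬ j ≤ s → j ≤ e → i ≠ j → c i ≠ c j := by
    intro i j hi hie hj hje hij
    rw [hc i, hc j, if_neg hi, if_neg hj]
    intro hcc
    have h1 : ε * (i - s) ≤ ε * t := Nat.mul_le_mul_left ε (by omega)
    have h2 : ε * (j - s) ≤ ε * t := Nat.mul_le_mul_left ε (by omega)
    have h3 : ε * (i - s) = ε * (j - s) := by omega
    have := Nat.eq_of_mul_eq_mul_left hεpos h3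
    omega
  -- mixed-side inequalities
  have hmix : ∀ i j, 1 ≤ i → i ≤ s → s < j → j ≤ e →
      2 * (ε * (s - i)) < d + 2 * (d / 2 - ε * (j - s)) ∧
      2 * (d / 2 - ε * (j - s)) < d + 2 * (ε * (s - i)) := by
    intro i j h1 h2 h3 h4
    have hB1 : ε * 1 ≤ ε * (j - s) := Nat.mul_le_mul_left ε (by omega)
    rw [mul_one] at hB1
    have hB2 : ε * (j - s) ≤ ε * t := Nat.mul_le_mul_left ε (by omega)
    have hAB : ε * ((s - i) + (j - s) + 1) ≤ ε * e := Nat.mul_le_mul_left ε (by omega)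
    rw [hde] at hAB
    have hexp : ε * ((s - i) + (j - s) + 1) = ε * (s - i) + ε * (j - s) + ε := by ring
    omega
  -- factors are nonzero
  have hfacne : ∀ m, 1 ≤ m → m ≤ e → ∀ j ∈ (Finset.Icc 1 e).erase m, u m - u j ≠ 0 := by
    intro m hm1 hme j hj
    obtain ⟨hjm, hj'⟩ := Finset.mem_erase.mp hj
    rw [Finset.mem_Icc] at hj'
    rw [hu m, hu j]
    by_cases hms : m ≤ s <;> by_cases hjs : j ≤ s
    · rw [if_pos hms, if_pos hjs]
      exact X_pow_sub_X_pow_ne_zero (hcneL m j hms hjs (Ne.symm hjm))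
    · rw [if_pos hms, if_neg hjs, sub_neg_eq_add]
      exact X_pow_add_X_pow_ne_zero _ _
    · rw [if_neg hms, if_pos hjs]
      have h : -(X : Polynomial ℝ) ^ c m - X ^ c j = -(X ^ c m + X ^ c j) := by ring
      rw [h, neg_ne_zero]
      exact X_pow_add_X_pow_ne_zero _ _
    · rw [if_neg hms, if_neg hjs]
      have h : -(X : Polynomial ℝ) ^ c m - -X ^ c j = X ^ c j - X ^ c m := by ring
      rw [h]
      exact X_pow_sub_X_pow_ne_zero (hcneR j m hjs hj'.2 hms hme hjm)
  -- factor values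
  have hfac : ∀ m, 1 ≤ m → m ≤ e → ∀ j ∈ (Finset.Icc 1 e).erase m,
      piFn 1 d (u m - u j) = ((c m : ℚ) + (c j : ℚ)) / d
        + (if ((j ≤ s) ↔ (m ≤ s)) then (1 : ℚ) / 2 else 0) := by
    intro m hm1 hme j hj
    obtain ⟨hjm, hj'⟩ := Finset.mem_erase.mp hj
    rw [Finset.mem_Icc] at hj'
    rw [hu m, hu j]
    by_cases hms : m ≤ s <;> by_cases hjs : j ≤ s
    · rw [if_pos hms, if_pos hjs, if_pos (by tauto),
        piFn_sub (hcneL m j hms hjs (Ne.symm hjm)) (hclt m hm1 hme) (hclt j hj'.1 hj'.2)]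
    · rw [if_pos hms, if_neg hjs, if_neg (by tauto), sub_neg_eq_add, add_zero]
      have hcm : c m = ε * (s - m) := by rw [hc m, if_pos hms]
      have hcj : c j = d / 2 - ε * (j - s) := by rw [hc j, if_neg hjs]
      obtain ⟨w1, w2⟩ := hmix m j hm1 hms (by omega) hj'.2
      rw [hcm, hcj] at *
      exact piFn_add w1 w2
    · rw [if_neg hms, if_pos hjs, if_neg (by tauto), add_zero]
      have h : -(X : Polynomial ℝ) ^ c m - X ^ c j = -(X ^ c m + X ^ c j) := by ring
      rw [h, piFn_neg]
      have hcm : c m = d / 2 - ε * (m - s) := by rw [hc m, if_neg hms]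
      have hcj : c j = ε * (s - j) := by rw [hc j, if_pos hjs]
      obtain ⟨w1, w2⟩ := hmix j m hj'.1 hjs (by omega) hme
      rw [hcm, hcj] at *
      exact piFn_add w2 w1
    · rw [if_neg hms, if_neg hjs, if_pos (show (j ≤ s) ↔ (m ≤ s) by tauto)]
      have h : -(X : Polynomial ℝ) ^ c m - -X ^ c j = X ^ c j - X ^ c m := by ring
      rw [h, piFn_sub (hcneR j m hjs hj'.2 hms hme hjm) (hclt j hj'.1 hj'.2) (hclt m hm1 hme)]
      ring
  -- key formula
  have hkey : ∀ m, 1 ≤ m → m ≤ e → piFn 1 d (V m) =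
      ((e : ℚ) * (c m) + ∑ j ∈ Finset.Icc 1 e, (c j : ℚ)) / d
        + (if m ≤ s then (s : ℚ) else (t : ℚ)) / 2 - 1 / 2 := by
    intro m hm1 hme
    have hm : m ∈ Finset.Icc 1 e := Finset.mem_Icc.mpr ⟨hm1, hme⟩
    rw [hV m, piFn_mul 1 d (pow_ne_zero _ X_ne_zero)
        (by rw [Ne, Finset.prod_eq_zero_iff]
            rintro ⟨j, hj, hj0⟩
            exact hfacne m hm1 hme j hj hj0),
      piFn_X_pow, piFn_prod 1 d _ _ (hfacne m hm1 hme),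
      Finset.sum_congr rfl (hfac m hm1 hme)]
    have herase : ∑ j ∈ (Finset.Icc 1 e).erase m,
        (((c m : ℚ) + (c j : ℚ)) / d + (if ((j ≤ s) ↔ (m ≤ s)) then (1 : ℚ) / 2 else 0))
        = (∑ j ∈ Finset.Icc 1 e,
            (((c m : ℚ) + (c j : ℚ)) / d + (if ((j ≤ s) ↔ (m ≤ s)) then (1 : ℚ) / 2 else 0)))
          - (((c m : ℚ) + (c m : ℚ)) / d + (if ((m ≤ s) ↔ (m ≤ s)) then (1 : ℚ) / 2 else 0)) :=
      (eq_sub_of_add_eq (Finset.sum_erase_add _ _ hm))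
    rw [herase, Finset.sum_add_distrib]
    have hsum1 : ∑ j ∈ Finset.Icc 1 e, ((c m : ℚ) + c j) / d
        = ((e : ℚ) * c m + ∑ j ∈ Finset.Icc 1 e, (c j : ℚ)) / d := by
      rw [← Finset.sum_div, Finset.sum_add_distrib, Finset.sum_const, Nat.card_Icc]
      simp only [Nat.add_sub_cancel, nsmul_eq_mul]
    have hsum2 : ∑ j ∈ Finset.Icc 1 e, (if ((j ≤ s) ↔ (m ≤ s)) then (1 : ℚ) / 2 else 0)
        = (if m ≤ s then (s : ℚ) else (t : ℚ)) / 2 := by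
      by_cases hms : m ≤ s
      · rw [if_pos hms]
        have hfil : Finset.filter (fun j => (j ≤ s) ↔ (m ≤ s)) (Finset.Icc 1 e)
            = Finset.Icc 1 s := by
          ext j
          simp only [Finset.mem_filter, Finset.mem_Icc, hms, iff_true]
          omega
        rw [Finset.sum_ite, Finset.sum_const, Finset.sum_const, smul_zero, add_zero, hfil,
          Nat.card_Icc, Nat.add_sub_cancel, nsmul_eq_mul]
        ring
      · rw [if_neg hms]
        have hfil : Finset.filter (fun j => (j ≤ s) ↔ (m ≤ s)) (Finset.Icc 1 e)
            = Finset.Icc (s + 1) e := by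
          ext j
          simp only [Finset.mem_filter, Finset.mem_Icc, hms, iff_false]
          omega
        rw [Finset.sum_ite, Finset.sum_const, Finset.sum_const, smul_zero, add_zero, hfil,
          Nat.card_Icc, nsmul_eq_mul]
        have : e + 1 - (s + 1) = t := by omega
        rw [this]
        ring
    rw [hsum1, hsum2, if_pos Iff.rfl]
    ring
  -- final assembly
  have hse : s ≤ e := by omega
  have hεq : ((ε : ℚ)) ≠ 0 := by exact_mod_cast hεpos.ne'
  have heq : ((e : ℚ)) ≠ 0 := by
    have : 0 < e := by omega
    exact_mod_cast this.ne'
  have hdq : (d : ℚ) = (ε : ℚ) * e := by exact_mod_cast hde.symm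
  have hc1 : (c 1 : ℚ) = (ε : ℚ) * ((s : ℚ) - 1) := by
    rw [hc 1, if_pos hs]
    push_cast [Nat.cast_sub hs]
    ring
  constructor
  · intro m hm1 hms
    rw [hkey 1 le_rfl (by omega), hkey m hm1 (by omega), if_pos hs, if_pos hms]
    have hcm : (c m : ℚ) = (ε : ℚ) * ((s : ℚ) - m) := by
      rw [hc m, if_pos hms]
      push_cast [Nat.cast_sub hms]
      ring
    rw [hc1, hcm, hdq]
    field_simp
    ring
  · intro m hm1 hmt
    rw [hkey 1 le_rfl (by omega), hkey (s + m) (by omega) (by omega), if_pos hs,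
      if_neg (by omega)]
    have hεm : ε * m ≤ d / 2 := le_trans (Nat.mul_le_mul_left ε (by omega)) hthalf
    have hd2q : ((d / 2 : ℕ) : ℚ) = (d : ℚ) / 2 := by
      have h := hd2
      have : ((2 * (d / 2) : ℕ) : ℚ) = (d : ℚ) := Nat.cast_inj.mpr h
      push_cast at this
      linarith
    have hcsm : (c (s + m) : ℚ) = (d : ℚ) / 2 - (ε : ℚ) * m := by
      rw [hc (s + m), if_neg (by omega)]
      have h1 : s + m - s = m := by omega
      rw [h1]
      push_cast [Nat.cast_sub hεm]
      rw [hd2q]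
    have hstq : (s : ℚ) + t = e := by exact_mod_cast hst
    rw [hc1, hcsm, hdq, ← hstq]
    have hstne : ((s : ℚ) + t) ≠ 0 := by
      have : (0 : ℕ) < s + t := by omega
      have h2 : (0 : ℚ) < (s : ℚ) + t := by exact_mod_cast this
      exact h2.ne'
    field_simp
    ring
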